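/- With ρ₀(t) = β₁(t) + i·β₂(t) where β₁(t) = (σ/t)·log(t/T)/D_σ(t), β₂(t) = (κ/t)/D_σ(t), and D_σ(t) = κ²/σ + σ·log²(t/T), the complex-valued function ρ₀ satisfies the Riccati-type equation ρ₀'(t) + ρ₀(t)/t + ρ₀(t)² = 0 for all t > 0. -/

import Mathlib

theorem stmt_11 (κ σ T : ℝ) (hσ : 0 < σ) (hκ : κ ≠ 0) (hT : 0 < T)
    (D : ℝ → ℝ) (hD : ∀ t, D t = κ^2 / σ + σ * (Real.log (t / T))^2)
    (ρ₀ : ℝ → ℂ)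
    (hρ : ∀ t, ρ₀ t = (((σ * Real.log (t / T) : ℝ) : ℂ) + Complex.I * (κ : ℂ))
      / (((t : ℝ) : ℂ) * ((D t : ℝ) : ℂ))) :
    ∀ t > 0, deriv ρ₀ t + ρ₀ t / (t : ℂ) + (ρ₀ t)^2 = 0 := by
  intro t ht
  have hκC : (κ : ℂ) ≠ 0 := by exact_mod_cast hκ
  have hσC : (σ : ℂ) ≠ 0 := by exact_mod_cast hσ.ne'
  set g : ℝ → ℂ := fun s => (s : ℂ) * ((σ : ℂ) * (Real.log (s / T) : ℂ) - Complex.I * κ)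
    with hgdef
  -- ρ₀ equals σ / g everywhere
  have hρg : ρ₀ = fun s => (σ : ℂ) / g s := by
    funext s
    rw [hρ s, hgdef]
    by_cases hs : s = 0
    · simp [hs]
    have hsC : (s : ℂ) ≠ 0 := by exact_mod_cast hs
    have haneg : (σ : ℂ) * (Real.log (s / T) : ℂ) - Complex.I * κ ≠ 0 := by
      intro h
      have := congrArg Complex.im h
      simp at this
      exact hκ this
    have hDs : ((D s : ℝ) : ℂ) = ((σ : ℂ) * (Real.log (s / T) : ℂ) + Complex.I * κ)
        * ((σ : ℂ) * (Real.log (s / T) : ℂ) - Complex.I * κ) / σ := by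
      rw [hD s]
      push_cast
      field_simp
      ring_nf
      simp [Complex.I_sq]
    rw [hDs]
    have hapos : ((σ : ℂ) * (Real.log (s / T) : ℂ) + Complex.I * κ) ≠ 0 := by
      intro h
      have := congrArg Complex.im h
      simp at this
      exact hκ this
    push_cast
    field_simp
  have htne : t ≠ 0 := ht.ne'
  have htC : (t : ℂ) ≠ 0 := by exact_mod_cast htne
  have haneg : (σ : ℂ) * (Real.log (t / T) : ℂ) - Complex.I * κ ≠ 0 := by
    intro h
    have := congrArg Complex.im h
    simp at this
    exact hκ this
  have hgne : g t ≠ 0 := mul_ne_zero htC haneg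
  -- derivative of log (s / T)
  have hL : HasDerivAt (fun s : ℝ => Real.log (s / T)) (1 / t) t := by
    have h1 : HasDerivAt (fun s : ℝ => s / T) (1 / T) t := by
      simpa using (hasDerivAt_id t).div_const T
    have h2 := (Real.hasDerivAt_log (div_ne_zero htne hT.ne')).comp t h1
    refine h2.congr_deriv ?_
    field_simp
  have hLC : HasDerivAt (fun s : ℝ => ((Real.log (s / T) : ℝ) : ℂ)) ((1 / t : ℝ) : ℂ) t :=
    hL.ofReal_comp
  have hid : HasDerivAt (fun s : ℝ => ((s : ℝ) : ℂ)) ((1 : ℝ) : ℂ) t :=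
    (hasDerivAt_id t).ofReal_comp
  have hinner : HasDerivAt (fun s : ℝ => (σ : ℂ) * (Real.log (s / T) : ℂ) - Complex.I * κ)
      ((σ : ℂ) * ((1 / t : ℝ) : ℂ)) t := by
    simpa using ((hLC.const_mul (σ : ℂ)).sub_const (Complex.I * κ))
  have hg' : HasDerivAt g
      (((1 : ℝ) : ℂ) * ((σ : ℂ) * (Real.log (t / T) : ℂ) - Complex.I * κ)
        + (t : ℂ) * ((σ : ℂ) * ((1 / t : ℝ) : ℂ))) t := hid.mul hinner
  have hg'' : HasDerivAt g ((σ : ℂ) * (Real.log (t / T) : ℂ) - Complex.I * κ + σ) t := by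
    convert hg' using 1
    push_cast
    field_simp
  have hρ' : HasDerivAt ρ₀
      ((0 * g t - (σ : ℂ) * ((σ : ℂ) * (Real.log (t / T) : ℂ) - Complex.I * κ + σ)) / (g t) ^ 2)
      t := by
    rw [hρg]
    exact (hasDerivAt_const t (σ : ℂ)).div hg'' hgne
  rw [hρ'.deriv, hρg]
  simp only [hgdef]
  field_simp
  ring
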